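/- Let $n \geq 1$ be an integer and let $R(x,y) = (x^2-y^2)\big(S_{n-1}(\delta) - S_{n-2}(\delta)\big) - 2\big(S_n(\delta) - S_{n-2}(\delta)\big) \in \mathbb{C}[x,y]$, where $\delta = 4y^2+2$ and $S_k$ are the Chebyshev polynomials with $S_0=1$, $S_1(t)=t$, $S_{k+1}(t)=tS_k(t)-S_{k-1}(t)$. Then $R$ is irreducible in $\mathbb{C}[x,y]$. -/

import Mathlib

open Polynomial

noncomputable section

/-- If `f` has a simple root, it is not a square. -/
lemma lem_nonsq (f : Polynomial ℂ) (y₀ : ℂ) (h0 : f.eval y₀ = 0)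
    (h1 : f.derivative.eval y₀ ≠ 0) (s : Polynomial ℂ) : s ^ 2 ≠ f := by
  intro hs
  subst hs
  have hs0 : s.eval y₀ = 0 := by
    rw [eval_pow] at h0
    exact pow_eq_zero_iff two_ne_zero |>.mp h0
  rw [derivative_pow] at h1
  simp [hs0] at h1

/-- Coprimality from absence of common roots. -/
lemma lem_coprime (a c : Polynomial ℂ) (ha : a ≠ 0)
    (h : ∀ r : ℂ, a.IsRoot r → ¬ c.IsRoot r) : IsCoprime a c := by
  classical
  rw [← EuclideanDomain.gcd_isUnit_iff]
  by_contra hu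
  set d := EuclideanDomain.gcd a c with hd
  have hda : d ∣ a := EuclideanDomain.gcd_dvd_left a c
  have hdc : d ∣ c := EuclideanDomain.gcd_dvd_right a c
  have hd0 : d ≠ 0 := by
    intro h0
    rw [h0] at hda
    exact ha (zero_dvd_iff.mp hda)
  have hdeg : 0 < d.degree := by
    rcases lt_or_eq_of_le (Polynomial.zero_le_degree_iff.mpr hd0) with h' | h'
    · exact h'
    · exact absurd (Polynomial.isUnit_iff_degree_eq_zero.mpr h'.symm) hu
  obtain ⟨r, hr⟩ := Complex.exists_root hdeg
  obtain ⟨e, he⟩ := hda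
  obtain ⟨e', he'⟩ := hdc
  refine h r ?_ ?_
  · rw [Polynomial.IsRoot, he, eval_mul, hr, zero_mul]
  · rw [Polynomial.IsRoot, he', eval_mul, hr, zero_mul]

/-- Irreducibility of `a X² - c` over `ℂ[y]`. -/
lemma lem_quad (a c : Polynomial ℂ) (ha : a ≠ 0) (hco : IsCoprime a c)
    (hsq : ∀ s : Polynomial ℂ, s ^ 2 ≠ a * c) :
    Irreducible (C a * X ^ 2 - C c) := by
  have hprim : (C a * X ^ 2 - C c).IsPrimitive := by
    intro r hr
    rw [C_dvd_iff_dvd_coeff] at hr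
    have h2 := hr 2
    have h0 := hr 0
    simp [coeff_C, coeff_C_mul, coeff_X_pow] at h2 h0
    exact hco.isUnit_of_dvd' h2 h0
  rw [hprim.irreducible_iff_irreducible_map_fraction_map (K := FractionRing (Polynomial ℂ))]
  set K := FractionRing (Polynomial ℂ)
  set φ := algebraMap (Polynomial ℂ) K with hφdef
  have hφ : Function.Injective φ := IsFractionRing.injective _ _
  have ha' : φ a ≠ 0 := fun h => ha (hφ (by simpa using h))
  have hmap : (C a * X ^ 2 - C c).map φ = C (φ a) * X ^ 2 - C (φ c) := by
    simp
  rw [hmap]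
  have key : Irreducible (X ^ 2 - C (φ c / φ a)) := by
    by_contra hirr
    have hmon : (X ^ 2 - C (φ c / φ a)).Monic := monic_X_pow_sub_C _ two_ne_zero
    have hnd : (X ^ 2 - C (φ c / φ a)).natDegree = 2 := by
      simpa using natDegree_X_pow_sub_C (n := 2) (a := φ c / φ a)
    obtain ⟨c₁, c₂, hmul, hadd⟩ := (hmon.not_irreducible_iff_exists_add_mul_eq_coeff hnd).mp hirr
    have hc0 : (X ^ 2 - C (φ c / φ a)).coeff 0 = -(φ c / φ a) := by simp
    have hc1 : (X ^ 2 - C (φ c / φ a)).coeff 1 = 0 := by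
      simp [coeff_X_pow]
    rw [hc0] at hmul
    rw [hc1] at hadd
    have hc2 : c₂ = -c₁ := by linear_combination -hadd
    have hd : φ c / φ a = c₁ ^ 2 := by
      rw [hc2] at hmul
      linear_combination -hmul
    have hs : (φ a * c₁) ^ 2 = φ (a * c) := by
      have : φ c = φ a * c₁ ^ 2 := by
        rw [div_eq_iff ha'] at hd
        linear_combination hd
      rw [map_mul, this]
      ring
    have hint : IsIntegral (Polynomial ℂ) (φ a * c₁) := by
      refine ⟨X ^ 2 - C (a * c), monic_X_pow_sub_C _ two_ne_zero, ?_⟩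
      simp [eval₂_sub, hs]
      exact sub_self _
    obtain ⟨s, hsval⟩ := IsIntegrallyClosed.isIntegral_iff.mp hint
    refine hsq s (hφ ?_)
    rw [map_pow, hsval, hs]
  have hassoc : C (φ a) * X ^ 2 - C (φ c) = C (φ a) * (X ^ 2 - C (φ c / φ a)) := by
    rw [mul_sub, ← C_mul, mul_div_cancel₀ _ ha']
  rw [hassoc]
  have hu : IsUnit (C (φ a)) := isUnit_C.mpr ha'.isUnit
  exact (Associated.irreducible_iff ⟨hu.unit, by rw [IsUnit.unit_spec, mul_comm]⟩).mp key

section cheb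

variable (S : ℤ → Polynomial ℂ) (hS0 : S 0 = 1) (hS1 : S 1 = Polynomial.X)
  (hS : ∀ k : ℤ, S (k + 1) = Polynomial.X * S k - S (k - 1))

include hS0 hS1 hS

lemma hSneg1 : S (-1) = 0 := by
  have h := hS 0
  norm_num at h
  rw [hS0, hS1] at h
  linear_combination h

lemma hSrec (m : ℕ) :
    S (((m + 2 : ℕ) : ℤ) - 1) = Polynomial.X * S (((m + 1 : ℕ) : ℤ) - 1) - S ((m : ℤ) - 1) := by
  have h := hS ((m : ℤ))
  have h1 : ((m + 2 : ℕ) : ℤ) - 1 = (m : ℤ) + 1 := by push_cast; ring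
  have h2 : ((m + 1 : ℕ) : ℤ) - 1 = (m : ℤ) := by push_cast; ring
  rw [h1, h2]
  exact h

lemma keyS : ∀ (m : ℕ) (z : ℂ), z ≠ 0 →
    (z ^ 2 - 1) * z ^ m * (S ((m : ℤ) - 1)).eval (z + z⁻¹) = z ^ (2 * m + 1) - z := by
  intro m
  induction m using Nat.twoStepInduction with
  | zero =>
    intro z hz
    norm_num [hSneg1 S hS0 hS1 hS]
  | one =>
    intro z hz
    norm_num [hS0]
    ring
  | more m ih0 ih1 =>
    intro z hz
    have e1 := ih1 z hz
    have e2 := ih0 z hz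
    rw [hSrec S hS0 hS1 hS m]
    have hzi : z * z⁻¹ = 1 := mul_inv_cancel₀ hz
    simp only [eval_sub, eval_mul, eval_X]
    set E1 := (S (((m + 1 : ℕ) : ℤ) - 1)).eval (z + z⁻¹) with hE1
    set E2 := (S ((m : ℤ) - 1)).eval (z + z⁻¹) with hE2
    linear_combination (z ^ 2 + 1) * e1 - z ^ 2 * e2 + (z ^ 2 - 1) * z ^ (m + 1) * E1 * hzi

lemma keyS2 : ∀ m : ℕ, (S ((m : ℤ) - 1)).eval 2 = (m : ℂ) := by
  intro m
  induction m using Nat.twoStepInduction with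
  | zero => norm_num [hSneg1 S hS0 hS1 hS]
  | one => norm_num [hS0]
  | more m ih0 ih1 =>
    rw [hSrec S hS0 hS1 hS m]
    simp only [eval_sub, eval_mul, eval_X]
    rw [ih0, ih1]
    push_cast
    ring

lemma keySneg2 : ∀ m : ℕ, (S ((m : ℤ) - 1)).eval (-2) = (-1) ^ (m + 1) * (m : ℂ) := by
  intro m
  induction m using Nat.twoStepInduction with
  | zero => norm_num [hSneg1 S hS0 hS1 hS]
  | one => norm_num [hS0]
  | more m ih0 ih1 =>
    rw [hSrec S hS0 hS1 hS m]
    simp only [eval_sub, eval_mul, eval_X]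
    rw [ih0, ih1]
    push_cast
    ring

end cheb

open MvPolynomial in
theorem stmt_19 (S : ℤ → Polynomial ℂ) (hS0 : S 0 = 1) (hS1 : S 1 = Polynomial.X)
    (hS : ∀ k : ℤ, S (k + 1) = Polynomial.X * S k - S (k - 1))
    (n : ℤ) (hn : 1 ≤ n)
    (x y δ : MvPolynomial (Fin 2) ℂ) (hx : x = X 0) (hy : y = X 1)
    (hδ : δ = 4 * y ^ 2 + 2)
    (R : MvPolynomial (Fin 2) ℂ)
    (hR : R = (x ^ 2 - y ^ 2) * (Polynomial.aeval δ (S (n - 1)) - Polynomial.aeval δ (S (n - 2)))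
      - 2 * (Polynomial.aeval δ (S n) - Polynomial.aeval δ (S (n - 2)))) :
    Irreducible R := by
  subst hx hy hδ hR
  have hn0 : (0 : ℤ) ≤ n := by omega
  set N : ℕ := n.toNat with hNdef
  have hnN : (N : ℤ) = n := Int.toNat_of_nonneg hn0
  have hN1 : 1 ≤ N := by omega
  obtain ⟨M, hM⟩ : ∃ M, N = M + 1 := ⟨N - 1, by omega⟩
  -- the algebra equivalence to ℂ[y][x]
  set e1 : MvPolynomial (Fin 1) ℂ ≃ₐ[ℂ] Polynomial ℂ :=
    (MvPolynomial.finSuccEquiv ℂ 0).trans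
      (Polynomial.mapAlgEquiv (MvPolynomial.isEmptyAlgEquiv ℂ (Fin 0))) with he1
  set e : MvPolynomial (Fin 2) ℂ ≃ₐ[ℂ] Polynomial (Polynomial ℂ) :=
    (MvPolynomial.finSuccEquiv ℂ 1).trans (Polynomial.mapAlgEquiv e1) with he
  have hEx : e (X 0 : MvPolynomial (Fin 2) ℂ) = Polynomial.X := by
    simp [he, AlgEquiv.trans_apply, MvPolynomial.finSuccEquiv_X_zero,
      Polynomial.coe_mapAlgEquiv, Polynomial.map_X]
  have hEy : e (X 1 : MvPolynomial (Fin 2) ℂ) = Polynomial.C Polynomial.X := by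
    have h1 : (X 1 : MvPolynomial (Fin 2) ℂ) = X (Fin.succ 0) := rfl
    rw [he, AlgEquiv.trans_apply, h1, MvPolynomial.finSuccEquiv_X_succ,
      Polynomial.coe_mapAlgEquiv, Polynomial.map_C]
    congr 1
    show e1 (MvPolynomial.X 0) = Polynomial.X
    rw [he1, AlgEquiv.trans_apply, MvPolynomial.finSuccEquiv_X_zero,
      Polynomial.coe_mapAlgEquiv, Polynomial.map_X]
  set q : Polynomial ℂ := 4 * Polynomial.X ^ 2 + 2 with hq
  have hEδ : e (4 * (X 1 : MvPolynomial (Fin 2) ℂ) ^ 2 + 2) = Polynomial.C q := by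
    rw [map_add, map_mul, map_pow, hEy, map_ofNat, map_ofNat, hq]
    rw [map_add, map_mul, map_pow, map_ofNat, map_ofNat]
  have hEaeval : ∀ P : Polynomial ℂ,
      e (Polynomial.aeval (4 * (X 1 : MvPolynomial (Fin 2) ℂ) ^ 2 + 2) P)
        = Polynomial.C (Polynomial.aeval q P) := by
    intro P
    rw [← Polynomial.aeval_algHom_apply, hEδ]
    have h2 := Polynomial.aeval_algHom_apply (Polynomial.CAlgHom (R := ℂ) (A := Polynomial ℂ)) q P
    simpa [Polynomial.CAlgHom] using h2
  set A : Polynomial ℂ := S (n - 1) - S (n - 2) with hA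
  set B : Polynomial ℂ := S n - S (n - 2) with hB
  set a : Polynomial ℂ := Polynomial.aeval q A with haq
  set bb : Polynomial ℂ := Polynomial.aeval q B with hbq
  set c : Polynomial ℂ := a * Polynomial.X ^ 2 + 2 * bb with hc
  rw [← MulEquiv.irreducible_iff e]
  have hER : e ((X 0 ^ 2 - X 1 ^ 2) *
        (Polynomial.aeval (4 * (X 1 : MvPolynomial (Fin 2) ℂ) ^ 2 + 2) (S (n - 1))
          - Polynomial.aeval (4 * (X 1 : MvPolynomial (Fin 2) ℂ) ^ 2 + 2) (S (n - 2)))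
      - 2 * (Polynomial.aeval (4 * (X 1 : MvPolynomial (Fin 2) ℂ) ^ 2 + 2) (S n)
          - Polynomial.aeval (4 * (X 1 : MvPolynomial (Fin 2) ℂ) ^ 2 + 2) (S (n - 2))))
      = Polynomial.C a * Polynomial.X ^ 2 - Polynomial.C c := by
    simp only [map_sub, map_mul, map_pow, map_ofNat, hEx, hEy, hEaeval]
    simp only [hc, haq, hbq, hA, hB, map_sub, map_add, map_mul, map_pow, map_ofNat]
    ring
  rw [hER]
  -- helper equalities
  have haevalP : ∀ P : Polynomial ℂ, Polynomial.aeval q P = P.comp q := by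
    intro P
    rw [Polynomial.aeval_def, Polynomial.comp, Polynomial.algebraMap_eq]
  have hevalP : ∀ (P : Polynomial ℂ) (r : ℂ),
      (Polynomial.aeval q P).eval r = P.eval (q.eval r) := by
    intro P r
    rw [haevalP, Polynomial.eval_comp]
  have hidx1 : n - 1 = ((M + 1 : ℕ) : ℤ) - 1 := by push_cast; omega
  have hidx2 : n - 2 = ((M : ℕ) : ℤ) - 1 := by push_cast; omega
  have hidx0 : n = ((M + 2 : ℕ) : ℤ) - 1 := by push_cast; omega
  have hAid : ∀ z : ℂ, z ≠ 0 → (z ^ 2 - 1) * z ^ (M + 1) * A.eval (z + z⁻¹)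
      = z * (z - 1) * (z ^ (2 * M + 1) + 1) := by
    intro z hz
    have e1' := keyS S hS0 hS1 hS (M + 1) z hz
    have e2' := keyS S hS0 hS1 hS M z hz
    rw [hA, hidx2, hidx1]
    simp only [Polynomial.eval_sub]
    linear_combination e1' - z * e2'
  have hBid : ∀ z : ℂ, z ≠ 0 → (z ^ 2 - 1) * z ^ (M + 2) * B.eval (z + z⁻¹)
      = z * (z ^ 2 - 1) * (z ^ (2 * M + 2) + 1) := by
    intro z hz
    have e3' := keyS S hS0 hS1 hS (M + 2) z hz
    have e2' := keyS S hS0 hS1 hS M z hz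
    rw [hB, hidx2, hidx0]
    simp only [Polynomial.eval_sub]
    linear_combination e3' - z ^ 2 * e2'
  have hA2 : A.eval 2 = 1 := by
    rw [hA, hidx2, hidx1]
    simp only [Polynomial.eval_sub]
    rw [keyS2 S hS0 hS1 hS (M + 1), keyS2 S hS0 hS1 hS M]
    push_cast
    ring
  have hAneg2' : A.eval (-2) ≠ 0 := by
    have hAneg2 : A.eval (-2) = (-1) ^ (M + 2) * (2 * (M : ℂ) + 1) := by
      rw [hA, hidx2, hidx1]
      simp only [Polynomial.eval_sub]
      rw [keySneg2 S hS0 hS1 hS (M + 1), keySneg2 S hS0 hS1 hS M]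
      push_cast
      ring
    rw [hAneg2]
    apply mul_ne_zero (pow_ne_zero _ (by norm_num))
    intro h
    have h2 : ((2 * M + 1 : ℕ) : ℂ) = 0 := by push_cast; linear_combination h
    have := Nat.cast_eq_zero.mp h2
    omega
  have hAB : ∀ t : ℂ, A.eval t = 0 → B.eval t ≠ 0 := by
    intro t hAt
    have hdeg : 0 < (Polynomial.X ^ 2 - Polynomial.C t * Polynomial.X + 1 : Polynomial ℂ).degree := by
      have hdd : (Polynomial.X ^ 2 - Polynomial.C t * Polynomial.X + 1 : Polynomial ℂ).degree = 2 := by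
        compute_degree!
      rw [hdd]
      norm_num
    obtain ⟨z, hzr⟩ := Complex.exists_root hdeg
    have hzeq : z ^ 2 - t * z + 1 = 0 := by simpa using hzr
    have hz0 : z ≠ 0 := by
      intro h
      rw [h] at hzeq
      norm_num at hzeq
    have ht : t = z + z⁻¹ := by
      field_simp
      linear_combination -hzeq
    have h1 := hAid z hz0
    rw [← ht, hAt, mul_zero] at h1
    have hz1 : z ≠ 1 := by
      intro h
      rw [h] at ht
      norm_num at ht
      rw [ht] at hAt
      rw [hA2] at hAt
      exact one_ne_zero hAt
    have hzM : z ^ (2 * M + 1) = -1 := by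
      rcases mul_eq_zero.mp h1.symm with h' | h'
      · rcases mul_eq_zero.mp h' with h'' | h''
        · exact absurd h'' hz0
        · exact absurd (by linear_combination h'' : z = 1) hz1
      · linear_combination h'
    have hzneg1 : z ≠ -1 := by
      intro h
      rw [h] at ht
      norm_num at ht
      rw [ht] at hAt
      exact hAneg2' hAt
    have hz2 : z ^ 2 - 1 ≠ 0 := by
      intro h
      rcases mul_eq_zero.mp (show (z - 1) * (z + 1) = 0 by linear_combination h) with h' | h'
      · exact hz1 (by linear_combination h')
      · exact hzneg1 (by linear_combination h')
    intro hBt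
    have h2 := hBid z hz0
    rw [← ht, hBt, mul_zero] at h2
    have hz22 : z ^ (2 * M + 2) = -1 * z := by
      have h22 : 2 * M + 2 = (2 * M + 1) + 1 := rfl
      rw [h22, pow_succ, hzM]
    rw [hz22] at h2
    have hne : z * (z ^ 2 - 1) * (-1 * z + 1) ≠ 0 := by
      apply mul_ne_zero (mul_ne_zero hz0 hz2)
      intro h
      exact hz1 (by linear_combination -h)
    exact hne h2.symm
  have haev0 : a.eval 0 = 1 := by
    rw [haq, hevalP]
    have hq0 : q.eval 0 = 2 := by rw [hq]; simp
    rw [hq0, hA2]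
  have ha : a ≠ 0 := by
    intro h
    rw [h] at haev0
    simp at haev0
  have hco : IsCoprime a c := by
    apply lem_coprime a c ha
    intro r har hcr
    have har2 : Polynomial.eval r (Polynomial.aeval q A) = 0 := har
    have htq : A.eval (q.eval r) = 0 := by
      rw [hevalP] at har2
      exact har2
    apply hAB _ htq
    have hce : c.eval r = 0 := hcr
    rw [hc] at hce
    simp only [Polynomial.eval_add, Polynomial.eval_mul, Polynomial.eval_pow, Polynomial.eval_X, Polynomial.eval_ofNat] at hce
    have har' : a.eval r = 0 := har
    rw [har', hbq, hevalP] at hce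
    linear_combination hce / 2
  refine lem_quad a c ha hco ?_
  rcases Nat.eq_zero_or_pos M with hM0 | hM1
  · -- n = 1
    subst hM0
    have hn1 : n = 1 := by omega
    have hA1 : A = 1 := by
      rw [hA, hn1]
      norm_num
      rw [hS0, hSneg1 S hS0 hS1 hS]
      ring
    have hB1 : B = Polynomial.X := by
      rw [hB, hn1]
      norm_num
      rw [hS1, hSneg1 S hS0 hS1 hS]
      ring
    have hac : a * c = 9 * Polynomial.X ^ 2 + 4 := by
      rw [hc, haq, hbq, hA1, hB1, map_one, Polynomial.aeval_X, hq]
      ring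
    intro s
    rw [hac]
    apply lem_nonsq _ ((2 / 3) * Complex.I)
    · simp only [Polynomial.eval_add, Polynomial.eval_mul, Polynomial.eval_pow,
        Polynomial.eval_ofNat, Polynomial.eval_X]
      rw [mul_pow, Complex.I_sq]
      norm_num
    · have hder : (9 * Polynomial.X ^ 2 + 4 : Polynomial ℂ).derivative = 18 * Polynomial.X := by
        simp
        ring
      rw [hder]
      simp only [Polynomial.eval_mul, Polynomial.eval_ofNat, Polynomial.eval_X]
      intro h
      rcases mul_eq_zero.mp h with h' | h'
      · norm_num at h'
      · rcases mul_eq_zero.mp h' with h'' | h''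
        · norm_num at h''
        · exact Complex.I_ne_zero h''
  · -- n ≥ 2
    set z₀ : ℂ := Complex.exp (Real.pi * Complex.I / (2 * M + 1)) with hz₀def
    set w₀ : ℂ := Complex.exp (Real.pi * Complex.I / (2 * (2 * M + 1))) with hw₀def
    have hz₀ne : z₀ ≠ 0 := Complex.exp_ne_zero _
    have hw₀ne : w₀ ≠ 0 := Complex.exp_ne_zero _
    have hMc' : 2 * (M : ℂ) + 1 ≠ 0 := by
      intro h
      have h2 : ((2 * M + 1 : ℕ) : ℂ) = 0 := by push_cast; linear_combination h
      have := Nat.cast_eq_zero.mp h2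
      omega
    have hw0sq : w₀ ^ 2 = z₀ := by
      rw [hw₀def, hz₀def, ← Complex.exp_nat_mul]
      congr 1
      push_cast
      field_simp
    have hzM : z₀ ^ (2 * M + 1) = -1 := by
      rw [hz₀def, ← Complex.exp_nat_mul, ← Complex.exp_pi_mul_I]
      congr 1
      push_cast
      field_simp
    have hπ : (Real.pi : ℂ) ≠ 0 := by
      exact_mod_cast Real.pi_ne_zero
    have hz₀sq : z₀ ^ 2 ≠ 1 := by
      intro h
      rw [hz₀def, ← Complex.exp_nat_mul, Complex.exp_eq_one_iff] at h
      obtain ⟨k, hk⟩ := h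
      push_cast at hk
      have hscale : (2 : ℂ) * Real.pi * Complex.I ≠ 0 := by
        simp [hπ, Complex.I_ne_zero]
      have h1 : (1 : ℂ) = (k : ℂ) * (2 * (M : ℂ) + 1) := by
        apply mul_left_cancel₀ hscale
        field_simp at hk
        linear_combination (2 * (Real.pi : ℂ) * Complex.I) * hk
      have h2 : (1 : ℤ) = k * (2 * (M : ℤ) + 1) := by exact_mod_cast h1
      have hdvd : (2 * (M : ℤ) + 1) ∣ 1 := ⟨k, by linarith⟩
      have := Int.le_of_dvd one_pos hdvd
      omega
    have hz₀1 : z₀ ≠ 1 := fun h => hz₀sq (by rw [h, one_pow])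
    have hz₀sub : z₀ ^ 2 - 1 ≠ 0 := sub_ne_zero.mpr hz₀sq
    set y₀ : ℂ := (w₀ - w₀⁻¹) / 2 with hy₀def
    have hy₀ne : y₀ ≠ 0 := by
      intro h
      apply hz₀1
      rw [← hw0sq]
      rw [hy₀def, _root_.div_eq_zero_iff] at h
      rcases h with h | h
      · have hw : w₀ = w₀⁻¹ := by linear_combination h
        field_simp at hw
        linear_combination hw
      · norm_num at h
    have hqy : q.eval y₀ = z₀ + z₀⁻¹ := by
      rw [hq, hy₀def, ← hw0sq]
      simp only [Polynomial.eval_add, Polynomial.eval_mul, Polynomial.eval_pow, Polynomial.eval_X, Polynomial.eval_ofNat]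
      field_simp
      ring
    have hAz0 : A.eval (z₀ + z₀⁻¹) = 0 := by
      have h0 : (z₀ ^ 2 - 1) * z₀ ^ (M + 1) * A.eval (z₀ + z₀⁻¹) = 0 := by
        rw [hAid z₀ hz₀ne, hzM]
        ring
      exact (mul_eq_zero.mp h0).resolve_left
        (mul_ne_zero hz₀sub (pow_ne_zero _ hz₀ne))
    have hBz0 : B.eval (z₀ + z₀⁻¹) ≠ 0 := hAB _ hAz0
    have hA'z0 : A.derivative.eval (z₀ + z₀⁻¹) ≠ 0 := by
      intro hA'0
      have hinner : HasDerivAt (fun z : ℂ => z + z⁻¹) (1 - (z₀ ^ 2)⁻¹) z₀ := by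
        have h1 := (hasDerivAt_id z₀).add (hasDerivAt_inv hz₀ne)
        exact h1.congr_deriv (by ring)
      have hAz : HasDerivAt (fun z : ℂ => A.eval (z + z⁻¹))
          (A.derivative.eval (z₀ + z₀⁻¹) * (1 - (z₀ ^ 2)⁻¹)) z₀ :=
        by have h := (A.hasDerivAt (z₀ + z₀⁻¹)).comp z₀ hinner; exact h
      have hP : HasDerivAt (fun z : ℂ => (z ^ 2 - 1) * z ^ (M + 1))
          ((2 * z₀) * z₀ ^ (M + 1) + (z₀ ^ 2 - 1) * ((M + 1 : ℕ) * z₀ ^ M)) z₀ := by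
        have h2 := ((hasDerivAt_pow 2 z₀).sub_const 1).mul (hasDerivAt_pow (M + 1) z₀)
        exact h2.congr_deriv (by norm_num)
      have hu := hP.mul hAz
      have hlg : HasDerivAt (fun z : ℂ => z * (z - 1)) (1 * (z₀ - 1) + z₀ * 1) z₀ :=
        (hasDerivAt_id z₀).mul ((hasDerivAt_id z₀).sub_const 1)
      have hrg : HasDerivAt (fun z : ℂ => z ^ (2 * M + 1) + 1)
          (((2 * M + 1 : ℕ) : ℂ) * z₀ ^ (2 * M)) z₀ := by
        have h3 := (hasDerivAt_pow (2 * M + 1) z₀).add_const 1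
        simpa using h3
      have hv := hlg.mul hrg
      have hev : (fun z : ℂ => z * (z - 1) * (z ^ (2 * M + 1) + 1))
          =ᶠ[nhds z₀] (fun z : ℂ => (z ^ 2 - 1) * z ^ (M + 1) * A.eval (z + z⁻¹)) := by
        filter_upwards [compl_singleton_mem_nhds hz₀ne] with z hz
        exact (hAid z hz).symm
      have hv' := hu.congr_of_eventuallyEq hev
      have heq := hv.unique hv'
      rw [hAz0, hA'0, hzM] at heq
      have hfinal : z₀ * (z₀ - 1) * (((2 * M + 1 : ℕ) : ℂ) * z₀ ^ (2 * M)) = 0 := by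
        linear_combination heq
      have hne : z₀ * (z₀ - 1) * (((2 * M + 1 : ℕ) : ℂ) * z₀ ^ (2 * M)) ≠ 0 := by
        apply mul_ne_zero (mul_ne_zero hz₀ne (sub_ne_zero.mpr hz₀1))
        apply mul_ne_zero
        · intro h
          have := Nat.cast_eq_zero.mp h
          omega
        · exact pow_ne_zero _ hz₀ne
      exact hne hfinal
    intro s
    have hay : a.eval y₀ = 0 := by
      rw [haq, hevalP, hqy]
      exact hAz0
    apply lem_nonsq (a * c) y₀
    · rw [Polynomial.eval_mul, hay, zero_mul]
    · rw [Polynomial.derivative_mul]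
      simp only [Polynomial.eval_add, Polynomial.eval_mul]
      rw [hay, zero_mul, add_zero]
      have hcy : c.eval y₀ = 2 * B.eval (z₀ + z₀⁻¹) := by
        rw [hc]
        simp only [Polynomial.eval_add, Polynomial.eval_mul, Polynomial.eval_pow, Polynomial.eval_X, Polynomial.eval_ofNat]
        rw [hay, hbq, hevalP, hqy]
        ring
      have hq' : q.derivative = 8 * Polynomial.X := by
        rw [hq]
        simp
        ring
      have hada : a.derivative.eval y₀ = A.derivative.eval (z₀ + z₀⁻¹) * (8 * y₀) := by
        rw [haq, haevalP, Polynomial.derivative_comp, Polynomial.eval_mul, Polynomial.eval_comp, hqy, hq']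
        simp only [Polynomial.eval_mul, Polynomial.eval_ofNat, Polynomial.eval_X]
        ring
      rw [hada, hcy]
      exact mul_ne_zero (mul_ne_zero hA'z0 (mul_ne_zero (by norm_num) hy₀ne))
        (mul_ne_zero two_ne_zero hBz0)
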